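/- With the Bedford-McMullen setup, the function $\psi : [h_r(\underline{p}_D), \log R] \to \mathbb{R}$, $\psi(z) = \max\{h(\underline{p}) : h_r(\underline{p}) = z\}$, is concave. -/

import Mathlib

open Real Finset

section Aux

set_option linter.unusedSectionVars false

variable {S : Type*} [Fintype S] [Nonempty S] {P : S → Type*} [∀ a, Fintype (P a)]
  [∀ a, Nonempty (P a)]

private noncomputable def HH (p : (Σ a : S, P a) → ℝ) : ℝ :=
  ∑ q : (Σ a : S, P a), Real.negMulLog (p q)

private noncomputable def Hr (p : (Σ a : S, P a) → ℝ) : ℝ :=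
  ∑ a : S, Real.negMulLog (∑ b : P a, p ⟨a, b⟩)

private lemma HH_eq (p : (Σ a : S, P a) → ℝ) :
    (-∑ q : (Σ a : S, P a), p q * Real.log (p q)) = HH p := by
  simp [HH, Real.negMulLog, neg_mul, Finset.sum_neg_distrib]

private lemma Hr_eq (p : (Σ a : S, P a) → ℝ) :
    (-∑ a : S, (∑ b : P a, p ⟨a, b⟩) * Real.log (∑ b : P a, p ⟨a, b⟩)) = Hr p := by
  simp [Hr, Real.negMulLog, neg_mul, Finset.sum_neg_distrib]

private lemma sumSigma (f : (Σ a : S, P a) → ℝ) :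
    ∑ q : Σ a : S, P a, f q = ∑ a : S, ∑ b : P a, f ⟨a, b⟩ := by
  rw [← Finset.sum_sigma]; rfl

/-- Concavity of `HH` along a convex combination. -/
private lemma HH_combo {p1 p2 : (Σ a : S, P a) → ℝ} (h1 : ∀ q, 0 ≤ p1 q) (h2 : ∀ q, 0 ≤ p2 q)
    {a b : ℝ} (ha : 0 ≤ a) (hb : 0 ≤ b) (hab : a + b = 1) :
    a * HH p1 + b * HH p2 ≤ HH (fun q => a * p1 q + b * p2 q) := by
  simp only [HH, Finset.mul_sum, ← Finset.sum_add_distrib]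
  refine Finset.sum_le_sum fun q _ => ?_
  have := Real.concaveOn_negMulLog.2 (Set.mem_Ici.2 (h1 q)) (Set.mem_Ici.2 (h2 q)) ha hb hab
  simpa using this

/-- Concavity of `Hr` along a convex combination. -/
private lemma Hr_combo {p1 p2 : (Σ a : S, P a) → ℝ} (h1 : ∀ q, 0 ≤ p1 q) (h2 : ∀ q, 0 ≤ p2 q)
    {a b : ℝ} (ha : 0 ≤ a) (hb : 0 ≤ b) (hab : a + b = 1) :
    a * Hr p1 + b * Hr p2 ≤ Hr (fun q => a * p1 q + b * p2 q) := by
  simp only [Hr, Finset.mul_sum, ← Finset.sum_add_distrib]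
  refine Finset.sum_le_sum fun c _ => ?_
  have m1 : (0:ℝ) ≤ ∑ b : P c, p1 ⟨c, b⟩ := Finset.sum_nonneg fun b _ => h1 _
  have m2 : (0:ℝ) ≤ ∑ b : P c, p2 ⟨c, b⟩ := Finset.sum_nonneg fun b _ => h2 _
  have := Real.concaveOn_negMulLog.2 (Set.mem_Ici.2 m1) (Set.mem_Ici.2 m2) ha hb hab
  simp only [smul_eq_mul] at this
  calc a * Real.negMulLog (∑ b : P c, p1 ⟨c, b⟩) + b * Real.negMulLog (∑ b : P c, p2 ⟨c, b⟩)
      ≤ Real.negMulLog (a * ∑ b : P c, p1 ⟨c, b⟩ + b * ∑ b : P c, p2 ⟨c, b⟩) := this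
    _ = Real.negMulLog (∑ x : P c, (a * p1 ⟨c, x⟩ + b * p2 ⟨c, x⟩)) := by
        rw [Finset.sum_add_distrib, ← Finset.mul_sum, ← Finset.mul_sum]

/-- Entropy is at most `log D`. -/
private lemma HH_le_log {p : (Σ a : S, P a) → ℝ} (hp : ∀ q, 0 ≤ p q)
    (hs : ∑ q : (Σ a : S, P a), p q = 1) :
    HH p ≤ Real.log (Fintype.card (Σ a : S, P a)) := by
  set D : ℝ := (Fintype.card (Σ a : S, P a) : ℝ) with hD
  haveI : Nonempty ((a : S) × P a) := ⟨⟨Classical.arbitrary S, Classical.arbitrary _⟩⟩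
  have hD0 : 0 < D := by
    have : 0 < Fintype.card ((a : S) × P a) := Fintype.card_pos
    simpa [hD] using (by exact_mod_cast this : (0:ℝ) < (Fintype.card ((a : S) × P a) : ℝ))
  have key : ∀ q : (Σ a : S, P a),
      Real.negMulLog (p q) ≤ p q * Real.log D + (1 / D - p q) := by
    intro q
    rcases eq_or_lt_of_le (hp q) with h | h
    · rw [← h]
      simp [Real.negMulLog]
      positivity
    · have hlog : Real.log ((D * p q)⁻¹) ≤ (D * p q)⁻¹ - 1 :=
        Real.log_le_sub_one_of_pos (by positivity)
      have h2 : p q * Real.log ((D * p q)⁻¹) ≤ p q * ((D * p q)⁻¹ - 1) :=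
        mul_le_mul_of_nonneg_left hlog h.le
      have e1 : p q * Real.log ((D * p q)⁻¹) = Real.negMulLog (p q) - p q * Real.log D := by
        rw [Real.log_inv, Real.log_mul (ne_of_gt hD0) (ne_of_gt h)]
        simp [Real.negMulLog]; ring
      have e2 : p q * ((D * p q)⁻¹ - 1) = 1 / D - p q := by
        field_simp
      linarith
  calc HH p ≤ ∑ q : (Σ a : S, P a), (p q * Real.log D + (1 / D - p q)) :=
        Finset.sum_le_sum fun q _ => key q
    _ = Real.log D := by
        rw [Finset.sum_add_distrib, ← Finset.sum_mul, hs, Finset.sum_sub_distrib, hs,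
          Finset.sum_const, Finset.card_univ]
        simp [hD]
        field_simp
        ring


/-- The uniform vector on `Q`. -/
private noncomputable def pD : (Σ a : S, P a) → ℝ :=
  fun _ => 1 / (Fintype.card (Σ a : S, P a) : ℝ)

private lemma card_pos' : (0:ℝ) < (Fintype.card (Σ a : S, P a) : ℝ) := by
  haveI : Nonempty ((a : S) × P a) := ⟨⟨Classical.arbitrary S, Classical.arbitrary _⟩⟩
  exact_mod_cast (Fintype.card_pos : 0 < Fintype.card ((a : S) × P a))

private lemma pD_nonneg : ∀ q, 0 ≤ (pD (S := S) (P := P)) q := by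
  intro q; unfold pD; positivity

private lemma pD_sum : ∑ q : (Σ a : S, P a), (pD (S := S) (P := P)) q = 1 := by
  unfold pD
  rw [Finset.sum_const, Finset.card_univ]
  have := card_pos' (S := S) (P := P)
  rw [nsmul_eq_mul]
  field_simp

private lemma HH_pD : HH (pD (S := S) (P := P)) = Real.log (Fintype.card (Σ a : S, P a)) := by
  have hc := card_pos' (S := S) (P := P)
  unfold HH pD
  rw [Finset.sum_const, Finset.card_univ]
  simp only [Real.negMulLog, nsmul_eq_mul]
  rw [Real.log_div one_ne_zero (ne_of_gt hc), Real.log_one]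
  field_simp
  ring

/-- `Hr pD` equals the explicit lower endpoint. -/
private lemma Hr_pD : Hr (pD (S := S) (P := P)) =
    -∑ a : S, ((Fintype.card (P a) : ℝ) / (Fintype.card (Σ a' : S, P a') : ℝ)) *
      Real.log ((Fintype.card (P a) : ℝ) / (Fintype.card (Σ a' : S, P a') : ℝ)) := by
  unfold Hr pD
  rw [← Finset.sum_neg_distrib]
  refine Finset.sum_congr rfl fun a _ => ?_
  rw [Finset.sum_const, Finset.card_univ]
  simp [Real.negMulLog, div_eq_mul_inv, mul_comm]

/-- The row-uniform vector, with `Hr = log R`. -/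
private noncomputable def pU : (Σ a : S, P a) → ℝ :=
  fun q => 1 / ((Fintype.card S : ℝ) * (Fintype.card (P q.1) : ℝ))

private lemma cardS_pos : (0:ℝ) < (Fintype.card S : ℝ) := by
  exact_mod_cast (Fintype.card_pos : 0 < Fintype.card S)

private lemma cardP_pos (a : S) : (0:ℝ) < (Fintype.card (P a) : ℝ) := by
  exact_mod_cast (Fintype.card_pos : 0 < Fintype.card (P a))

private lemma pU_nonneg : ∀ q, 0 ≤ (pU (S := S) (P := P)) q := by
  intro q; unfold pU; positivity

private lemma pU_row (a : S) : ∑ b : P a, (pU (S := S) (P := P)) ⟨a, b⟩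
    = 1 / (Fintype.card S : ℝ) := by
  have hterm : ∀ b : P a, (pU (S := S) (P := P)) ⟨a, b⟩
      = 1 / ((Fintype.card S : ℝ) * (Fintype.card (P a) : ℝ)) := fun b => rfl
  rw [Finset.sum_congr rfl fun b _ => hterm b, Finset.sum_const, Finset.card_univ]
  have h1 := cardS_pos (S := S)
  have h2 := cardP_pos (P := P) a
  field_simp
  rw [nsmul_eq_mul]
  field_simp

private lemma pU_sum : ∑ q : (Σ a : S, P a), (pU (S := S) (P := P)) q = 1 := by
  rw [sumSigma]
  simp only [pU_row]
  rw [Finset.sum_const, Finset.card_univ]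
  have h1 := cardS_pos (S := S)
  rw [nsmul_eq_mul]
  field_simp

private lemma Hr_pU : Hr (pU (S := S) (P := P)) = Real.log (Fintype.card S) := by
  unfold Hr
  simp only [pU_row]
  rw [Finset.sum_const, Finset.card_univ]
  have h1 := cardS_pos (S := S)
  simp only [Real.negMulLog, nsmul_eq_mul]
  rw [Real.log_div one_ne_zero (ne_of_gt h1), Real.log_one]
  field_simp
  ring

/-- IVT for `Hr` along the segment from `p0` to `p1`. -/
private lemma exists_on_segment (p0 p1 : (Σ a : S, P a) → ℝ) {z : ℝ}
    (hz1 : Hr p1 ≤ z) (hz0 : z ≤ Hr p0) :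
    ∃ t ∈ Set.Icc (0:ℝ) 1, Hr (fun q => (1 - t) * p0 q + t * p1 q) = z := by
  set g : ℝ → ℝ := fun t => Hr (fun q => (1 - t) * p0 q + t * p1 q) with hg
  have hcont : Continuous g := by
    unfold g
    unfold Hr
    refine continuous_finset_sum _ fun a _ => ?_
    exact Real.continuous_negMulLog.comp
      (continuous_finset_sum _ fun b _ => by continuity)
  have h01 : (0:ℝ) ≤ 1 := zero_le_one
  have := intermediate_value_Icc' h01 hcont.continuousOn
  have hz : z ∈ Set.Icc (g 1) (g 0) := by
    constructor
    · simpa [hg] using hz1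
    · simpa [hg] using hz0
  obtain ⟨t, ht, hgt⟩ := this hz
  exact ⟨t, ht, hgt⟩

/-- Key lemma: given a simplex vector `p0` with `Hr p0 ≥ z ≥ Hr pD`, there is a
simplex vector with `Hr = z` and entropy at least `HH p0`. -/
private lemma exists_good {p0 : (Σ a : S, P a) → ℝ} (h0 : ∀ q, 0 ≤ p0 q)
    (hs0 : ∑ q : (Σ a : S, P a), p0 q = 1) {z : ℝ}
    (hzD : Hr (pD (S := S) (P := P)) ≤ z) (hz0 : z ≤ Hr p0) :
    ∃ p : (Σ a : S, P a) → ℝ, (∀ q, 0 ≤ p q) ∧ (∑ q : (Σ a : S, P a), p q) = 1 ∧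
      Hr p = z ∧ HH p0 ≤ HH p := by
  obtain ⟨t, ⟨ht0, ht1⟩, ht⟩ := exists_on_segment p0 (pD (S := S) (P := P)) hzD hz0
  refine ⟨fun q => (1 - t) * p0 q + t * (pD (S := S) (P := P)) q, ?_, ?_, ht, ?_⟩
  · intro q
    have h1 := pD_nonneg (S := S) (P := P) q
    have h2 := h0 q
    have h1t : (0:ℝ) ≤ 1 - t := by linarith
    exact add_nonneg (mul_nonneg h1t h2) (mul_nonneg ht0 h1)
  · rw [Finset.sum_add_distrib, ← Finset.mul_sum, ← Finset.mul_sum, hs0,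
      pD_sum (S := S) (P := P)]
    ring
  · have hcombo := HH_combo h0 (pD_nonneg (S := S) (P := P))
      (by linarith : (0:ℝ) ≤ 1 - t) ht0 (by ring)
    have hle : HH p0 ≤ HH (pD (S := S) (P := P)) := by
      rw [HH_pD]
      exact HH_le_log h0 hs0
    nlinarith

/-- Nonemptiness of the constraint set for every `z` in the interval. -/
private lemma exists_mem {z : ℝ} (hzD : Hr (pD (S := S) (P := P)) ≤ z)
    (hzR : z ≤ Real.log (Fintype.card S)) :
    ∃ p : (Σ a : S, P a) → ℝ, (∀ q, 0 ≤ p q) ∧ (∑ q : (Σ a : S, P a), p q) = 1 ∧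
      Hr p = z := by
  obtain ⟨p, h1, h2, h3, _⟩ := exists_good (pU_nonneg (S := S) (P := P))
    (pU_sum (S := S) (P := P)) hzD (by rw [Hr_pU]; exact hzR)
  exact ⟨p, h1, h2, h3⟩

end Aux


/-- The function `ψ(z) = max { h(p) : h_r(p) = z }` is concave on `[h_r(p_D), log R]`. -/
theorem stmt7 (S : Type*) [Fintype S] [Nonempty S] (P : S → Type*) [∀ a, Fintype (P a)]
    [∀ a, Nonempty (P a)] :
    ConcaveOn ℝ
      (Set.Icc
        (-∑ a : S, ((Fintype.card (P a) : ℝ) / (Fintype.card (Σ a' : S, P a') : ℝ)) *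
            Real.log ((Fintype.card (P a) : ℝ) / (Fintype.card (Σ a' : S, P a') : ℝ)))
        (Real.log (Fintype.card S)))
      (fun z : ℝ =>
        sSup {x : ℝ | ∃ p : (Σ a : S, P a) → ℝ, (∀ q, 0 ≤ p q) ∧
          (∑ q : (Σ a : S, P a), p q) = 1 ∧
          (-∑ a : S, (∑ b : P a, p ⟨a, b⟩) * Real.log (∑ b : P a, p ⟨a, b⟩)) = z ∧
          x = -∑ q : (Σ a : S, P a), p q * Real.log (p q)}) := by
  classical
  set Sset : ℝ → Set ℝ := fun z =>
    {x : ℝ | ∃ p : (Σ a : S, P a) → ℝ, (∀ q, 0 ≤ p q) ∧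
      (∑ q : (Σ a : S, P a), p q) = 1 ∧
      (-∑ a : S, (∑ b : P a, p ⟨a, b⟩) * Real.log (∑ b : P a, p ⟨a, b⟩)) = z ∧
      x = -∑ q : (Σ a : S, P a), p q * Real.log (p q)} with hSset
  have hmem : ∀ z x, x ∈ Sset z ↔ ∃ p : (Σ a : S, P a) → ℝ, (∀ q, 0 ≤ p q) ∧
      (∑ q : (Σ a : S, P a), p q) = 1 ∧ Hr p = z ∧ x = HH p := by
    intro z x
    constructor
    · rintro ⟨p, h1, h2, h3, h4⟩
      rw [Hr_eq] at h3; rw [HH_eq] at h4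
      exact ⟨p, h1, h2, h3, h4⟩
    · rintro ⟨p, h1, h2, h3, h4⟩
      exact ⟨p, h1, h2, by rw [Hr_eq]; exact h3, by rw [HH_eq]; exact h4⟩
  have hbdd : ∀ z, BddAbove (Sset z) := by
    intro z
    refine ⟨Real.log (Fintype.card (Σ a : S, P a)), fun x hx => ?_⟩
    obtain ⟨p, h1, h2, _, h4⟩ := (hmem z x).1 hx
    rw [h4]
    exact HH_le_log h1 h2
  have hne : ∀ z, Hr (pD (S := S) (P := P)) ≤ z → z ≤ Real.log (Fintype.card S) →
      (Sset z).Nonempty := by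
    intro z hz1 hz2
    obtain ⟨p, h1, h2, h3⟩ := exists_mem hz1 hz2
    exact ⟨HH p, (hmem z _).2 ⟨p, h1, h2, h3, rfl⟩⟩
  constructor
  · exact convex_Icc _ _
  intro z1 hz1 z2 hz2 a b ha hb hab
  rw [← Hr_pD (S := S) (P := P)] at hz1 hz2
  simp only [smul_eq_mul]
  set z : ℝ := a * z1 + b * z2 with hz
  have haz1 := mul_le_mul_of_nonneg_left hz1.1 ha
  have hbz2 := mul_le_mul_of_nonneg_left hz2.1 hb
  have haz1' := mul_le_mul_of_nonneg_left hz1.2 ha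
  have hbz2' := mul_le_mul_of_nonneg_left hz2.2 hb
  have hzD : Hr (pD (S := S) (P := P)) ≤ z := by
    have : a * Hr (pD (S := S) (P := P)) + b * Hr (pD (S := S) (P := P))
        = Hr (pD (S := S) (P := P)) := by rw [← add_mul, hab, one_mul]
    rw [hz]; linarith
  have hzR : z ≤ Real.log (Fintype.card S) := by
    have : a * Real.log (Fintype.card S) + b * Real.log (Fintype.card S)
        = Real.log (Fintype.card S) := by rw [← add_mul, hab, one_mul]
    rw [hz]; linarith
  have hkey : ∀ x1 ∈ Sset z1, ∀ x2 ∈ Sset z2, a * x1 + b * x2 ≤ sSup (Sset z) := by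
    intro x1 hx1 x2 hx2
    obtain ⟨p1, h11, h12, h13, h14⟩ := (hmem z1 x1).1 hx1
    obtain ⟨p2, h21, h22, h23, h24⟩ := (hmem z2 x2).1 hx2
    set pc : (Σ a : S, P a) → ℝ := fun q => a * p1 q + b * p2 q with hpc
    have hc1 : ∀ q, 0 ≤ pc q := fun q =>
      add_nonneg (mul_nonneg ha (h11 q)) (mul_nonneg hb (h21 q))
    have hc2 : ∑ q : (Σ a : S, P a), pc q = 1 := by
      rw [hpc]
      rw [Finset.sum_add_distrib, ← Finset.mul_sum, ← Finset.mul_sum, h12, h22]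
      simpa using hab
    have hcr : z ≤ Hr pc := by
      have := Hr_combo h11 h21 ha hb hab
      rw [h13, h23] at this
      exact this
    obtain ⟨p, hp1, hp2, hp3, hp4⟩ := exists_good hc1 hc2 hzD hcr
    have hch : a * x1 + b * x2 ≤ HH pc := by
      have := HH_combo h11 h21 ha hb hab
      rw [← h14, ← h24] at this
      exact this
    have hmemz : HH p ∈ Sset z := (hmem z _).2 ⟨p, hp1, hp2, hp3, rfl⟩
    calc a * x1 + b * x2 ≤ HH pc := hch
      _ ≤ HH p := hp4
      _ ≤ sSup (Sset z) := le_csSup (hbdd z) hmemz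
  have s1ne : (Sset z1).Nonempty := hne z1 hz1.1 hz1.2
  have s2ne : (Sset z2).Nonempty := hne z2 hz2.1 hz2.2
  rcases eq_or_lt_of_le ha with ha0 | ha0
  · obtain ⟨x2, hx2⟩ := s2ne
    have hb1 : b = 1 := by linarith
    have hzz : z = z2 := by rw [hz, ← ha0, hb1]; ring
    rw [← ha0, hb1, hzz]
    have : sSup (Sset z2) ≤ sSup (Sset z2) := le_refl _
    linarith
  rcases eq_or_lt_of_le hb with hb0 | hb0
  · obtain ⟨x1, hx1⟩ := s1ne
    have ha1 : a = 1 := by linarith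
    have hzz : z = z1 := by rw [hz, ← hb0, ha1]; ring
    rw [← hb0, ha1, hzz]
    have : sSup (Sset z1) ≤ sSup (Sset z1) := le_refl _
    linarith
  · have hA : ∀ x2 ∈ Sset z2, a * sSup (Sset z1) + b * x2 ≤ sSup (Sset z) := by
      intro y2 hy2
      have hstep : sSup (Sset z1) ≤ (sSup (Sset z) - b * y2) / a := by
        refine csSup_le s1ne fun x1 hx1 => ?_
        rw [le_div_iff₀ ha0]
        have := hkey x1 hx1 y2 hy2
        linarith
      have := (le_div_iff₀ ha0).1 hstep
      linarith
    have hstep2 : sSup (Sset z2) ≤ (sSup (Sset z) - a * sSup (Sset z1)) / b := by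
      refine csSup_le s2ne fun y2 hy2 => ?_
      rw [le_div_iff₀ hb0]
      have := hA y2 hy2
      linarith
    have := (le_div_iff₀ hb0).1 hstep2
    linarith
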